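/- For the maximally correlated pair (X, Y) produced by the paper's correlated perturbation: E[(X + Y − w_i − w_j)²] = −4(m̄ − c)(m̄ − (c − r·α(ε))) if m̄ ≤ c, and E[(X + Y − w_i − w_j)²] = −4(m̄ − c)(m̄ − (c + r·α(ε))) if m̄ ≥ c, where m̄ = (w_i + w_j)/2. -/

import Mathlib

open Real Set

/-- `α(ε) = (e^ε + 1)/(e^ε − 1)`. -/
noncomputable def alphaFn (ε : ℝ) : ℝ := (Real.exp ε + 1) / (Real.exp ε - 1)

/-- The LDP-FL marginal `P(output = c + rα(ε))` at input `u`. -/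
noncomputable def qOf (c r ε u : ℝ) : ℝ := 1 / 2 + (u - c) / (2 * r * alphaFn ε)

/-- The output level associated with a Boolean outcome: `true ↦ c + rα(ε)`, `false ↦ c − rα(ε)`. -/
noncomputable def valOf (c r ε : ℝ) (b : Bool) : ℝ :=
  if b then c + r * alphaFn ε else c - r * alphaFn ε

/-- The joint pmf of the maximally (negatively) correlated pair `(X, Y)` produced by the
paper's correlated perturbation (the antitone coupling of the two LDP-FL marginals
`P_A = qOf c r ε wi`, `P_B = qOf c r ε wj`); `true ↦ c + rα(ε)`, `false ↦ c − rα(ε)`. -/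
noncomputable def jpCor (c r ε wi wj : ℝ) (b b' : Bool) : ℝ :=
  if b then
    (if b' then max 0 (qOf c r ε wi + qOf c r ε wj - 1)
     else min (qOf c r ε wi) (1 - qOf c r ε wj))
  else
    (if b' then min (1 - qOf c r ε wi) (qOf c r ε wj)
     else max 0 (1 - qOf c r ε wi - qOf c r ε wj))

/-- `E[(X + Y − wi − wj)²]` for the maximally correlated pair. -/
noncomputable def mseCor (c r ε wi wj : ℝ) : ℝ :=
  ∑ b : Bool, ∑ b' : Bool,
    jpCor c r ε wi wj b b' * (valOf c r ε b + valOf c r ε b' - wi - wj) ^ 2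

/-- for the maximally correlated pair `(X, Y)`, with `m̄ = (wi + wj)/2`,
`E[(X + Y − wi − wj)²] = −4(m̄ − c)(m̄ − (c − rα(ε)))` if `m̄ ≤ c`, and
`E[(X + Y − wi − wj)²] = −4(m̄ − c)(m̄ − (c + rα(ε)))` if `m̄ ≥ c`. -/
theorem stmt13 (c r ε : ℝ) (hr : 0 < r) (hε : 0 < ε)
    (wi wj : ℝ) (hwi : wi ∈ Icc (c - r) (c + r)) (hwj : wj ∈ Icc (c - r) (c + r)) :
    ((wi + wj) / 2 ≤ c →
      mseCor c r ε wi wj =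
        -4 * ((wi + wj) / 2 - c) * ((wi + wj) / 2 - (c - r * alphaFn ε))) ∧
    (c ≤ (wi + wj) / 2 →
      mseCor c r ε wi wj =
        -4 * ((wi + wj) / 2 - c) * ((wi + wj) / 2 - (c + r * alphaFn ε))) := by
  have hα : 0 < alphaFn ε := by
    have h1 : (1 : ℝ) < Real.exp ε := by
      simpa using Real.exp_lt_exp.2 hε
    exact div_pos (by linarith) (by linarith)
  have ha : 0 < r * alphaFn ε := mul_pos hr hα
  have hane : r * alphaFn ε ≠ 0 := ha.ne'
  have h1 : qOf c r ε wi + qOf c r ε wj - 1 = ((wi + wj) / 2 - c) / (r * alphaFn ε) := by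
    unfold qOf
    field_simp
    ring
  constructor
  · intro hm
    have hs : qOf c r ε wi + qOf c r ε wj - 1 ≤ 0 := by
      rw [h1]; exact div_nonpos_of_nonpos_of_nonneg (by linarith) ha.le
    have e1 : max 0 (qOf c r ε wi + qOf c r ε wj - 1) = 0 := max_eq_left hs
    have e2 : min (qOf c r ε wi) (1 - qOf c r ε wj) = qOf c r ε wi :=
      min_eq_left (by linarith)
    have e3 : min (1 - qOf c r ε wi) (qOf c r ε wj) = qOf c r ε wj :=
      min_eq_right (by linarith)
    have e4 : max 0 (1 - qOf c r ε wi - qOf c r ε wj) =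
        1 - qOf c r ε wi - qOf c r ε wj := max_eq_right (by linarith)
    simp only [mseCor, jpCor, valOf, Fintype.sum_bool, if_true, if_false,
      Bool.cond_true, Bool.false_eq_true, e1, e2, e3, e4]
    unfold qOf
    field_simp
    ring
  · intro hm
    have hs : 0 ≤ qOf c r ε wi + qOf c r ε wj - 1 := by
      rw [h1]; exact div_nonneg (by linarith) ha.le
    have e1 : max 0 (qOf c r ε wi + qOf c r ε wj - 1) =
        qOf c r ε wi + qOf c r ε wj - 1 := max_eq_right hs
    have e2 : min (qOf c r ε wi) (1 - qOf c r ε wj) = 1 - qOf c r ε wj :=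
      min_eq_right (by linarith)
    have e3 : min (1 - qOf c r ε wi) (qOf c r ε wj) = 1 - qOf c r ε wi :=
      min_eq_left (by linarith)
    have e4 : max 0 (1 - qOf c r ε wi - qOf c r ε wj) = 0 := max_eq_left (by linarith)
    simp only [mseCor, jpCor, valOf, Fintype.sum_bool, if_true, if_false,
      Bool.cond_true, Bool.false_eq_true, e1, e2, e3, e4]
    unfold qOf
    field_simp
    ring
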